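/- Let D ≥ 2 be a natural number, let α ≥ 2 be a real number, and let b = 2^ℓ for a natural number ℓ ≥ 1 with b ≥ 4·(log₂ α)/(log₂ D). Let s : ℕ → ℝ be a nondecreasing function with s(0) ≥ 1 and s(j) ≤ α for every j ∈ ℕ. Then the number of natural numbers j with 0.01·log₂ D ≤ j ≤ 0.1·log₂ D for which there exists a natural number r ≥ 8 satisfying s(j + ℓ + r) > 2^{b·2^{r−1}} · s(j + ℓ) is at most 0.02·log₂ D. -/

import Mathlib

open Finset Real Classical

private lemma pow16 : ∀ r : ℕ, 8 ≤ r → 16 * r ≤ 2 ^ (r - 1) := by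
  intro r hr
  induction r with
  | zero => omega
  | succ n ih =>
    rcases Nat.lt_or_ge n 8 with h | h
    · interval_cases n <;> simp_all <;> norm_num
    · have h1 := ih (by omega)
      have h2 : 2 ^ (n - 1) ≥ 128 := by
        calc (128 : ℕ) = 2 ^ 7 := by norm_num
        _ ≤ 2 ^ (n - 1) := Nat.pow_le_pow_right (by norm_num) (by omega)
      have h3 : n + 1 - 1 = (n - 1) + 1 := by omega
      rw [h3, pow_succ]
      omega

/-- Lemma 3 (`cl:goodj-cond`) of the paper: the number of integers `j` with
`0.01·log₂ D ≤ j ≤ 0.1·log₂ D` for which some `r ≥ 8` has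
`s (j+ℓ+r) > 2^(b·2^(r-1)) · s (j+ℓ)` is at most `0.02·log₂ D`. -/
theorem stmt_1 (D : ℕ) (hD : 2 ≤ D) (α : ℝ) (hα : 2 ≤ α)
    (ℓ b : ℕ) (hℓ : 1 ≤ ℓ) (hb : b = 2 ^ ℓ)
    (hbα : 4 * Real.logb 2 α / Real.logb 2 D ≤ (b : ℝ))
    (s : ℕ → ℝ) (hmono : Monotone s) (hs0 : 1 ≤ s 0) (hsα : ∀ j, s j ≤ α) :
    (((Finset.range (D + 1)).filter (fun j : ℕ =>
        0.01 * Real.logb 2 D ≤ (j : ℝ) ∧ (j : ℝ) ≤ 0.1 * Real.logb 2 D ∧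
        ∃ r : ℕ, 8 ≤ r ∧
          2 ^ (b * 2 ^ (r - 1)) * s (j + ℓ) < s (j + ℓ + r))).card : ℝ)
      ≤ 0.02 * Real.logb 2 D := by
  -- basic positivity facts
  have hs1 : ∀ j, (1:ℝ) ≤ s j := fun j => hs0.trans (hmono (Nat.zero_le j))
  have hspos : ∀ j, (0:ℝ) < s j := fun j => lt_of_lt_of_le one_pos (hs1 j)
  have hb2 : (2:ℕ) ≤ b := by
    rw [hb]; calc (2:ℕ) = 2 ^ 1 := rfl
    _ ≤ 2 ^ ℓ := Nat.pow_le_pow_right (by norm_num) hℓ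
  have hbR : (2:ℝ) ≤ (b:ℝ) := by exact_mod_cast hb2
  have hbpos : (0:ℝ) < (b:ℝ) := by linarith
  have hlogD : (1:ℝ) ≤ Real.logb 2 D := by
    have : Real.logb 2 2 ≤ Real.logb 2 D :=
      Real.logb_le_logb_of_le (by norm_num) (by norm_num) (by exact_mod_cast hD)
    simpa using this
  -- the log-scale function
  set t : ℕ → ℝ := fun j => Real.logb 2 (s (j + ℓ)) with ht
  have tmono : ∀ i j : ℕ, i ≤ j → t i ≤ t j := by
    intro i j hij
    exact Real.logb_le_logb_of_le (by norm_num) (hspos _) (hmono (by omega))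
  have tnonneg : ∀ j, 0 ≤ t j := by
    intro j
    exact Real.logb_nonneg (by norm_num) (hs1 _)
  have tle : ∀ j, t j ≤ Real.logb 2 α := by
    intro j
    exact Real.logb_le_logb_of_le (by norm_num) (hspos _) (hsα _)
  -- badness predicate
  set bad : ℕ → Prop := fun j => ∃ r : ℕ, 8 ≤ r ∧
      2 ^ (b * 2 ^ (r - 1)) * s (j + ℓ) < s (j + ℓ + r) with hbad
  have tjump : ∀ j r : ℕ, 2 ^ (b * 2 ^ (r - 1)) * s (j + ℓ) < s (j + ℓ + r) →
      t j + (b : ℝ) * 2 ^ (r - 1) ≤ t (j + r) := by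
    intro j r h
    have h1 : t (j + r) = Real.logb 2 (s (j + ℓ + r)) := by
      simp only [ht]
      congr 2
      omega
    have h2 : Real.logb 2 ((2:ℝ) ^ (b * 2 ^ (r - 1)) * s (j + ℓ))
        = (b : ℝ) * 2 ^ (r - 1) + t j := by
      rw [Real.logb_mul (by positivity) (ne_of_gt (hspos _)), Real.logb_pow,
        Real.logb_self_eq_one (by norm_num)]
      simp only [ht]
      push_cast
      ring
    have h3 : Real.logb 2 ((2:ℝ) ^ (b * 2 ^ (r - 1)) * s (j + ℓ))
        ≤ Real.logb 2 (s (j + ℓ + r)) :=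
      Real.logb_le_logb_of_le (by norm_num)
        (mul_pos (by positivity) (hspos _)) h.le
    rw [h1]; rw [h2] at h3; linarith
  -- the key counting claim, by downward induction
  have key : ∀ n lo : ℕ, D + 1 - lo ≤ n →
      (((Finset.range (D + 1)).filter (fun j => lo ≤ j ∧ bad j)).card : ℝ)
        ≤ (Real.logb 2 α - t lo) / (16 * b) := by
    intro n
    induction n with
    | zero =>
      intro lo hlo
      have : ((Finset.range (D + 1)).filter (fun j => lo ≤ j ∧ bad j)) = ∅ := by
        apply Finset.filter_false_of_mem
        intro j hj
        simp only [Finset.mem_range] at hj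
        intro hc
        omega
      rw [this]
      simp only [Finset.card_empty, Nat.cast_zero]
      apply div_nonneg _ (by positivity)
      linarith [tle lo]
    | succ n ih =>
      intro lo hlo
      by_cases hlolt : D + 1 ≤ lo
      · have : ((Finset.range (D + 1)).filter (fun j => lo ≤ j ∧ bad j)) = ∅ := by
          apply Finset.filter_false_of_mem
          intro j hj
          simp only [Finset.mem_range] at hj
          intro hc
          omega
        rw [this]
        simp only [Finset.card_empty, Nat.cast_zero]
        apply div_nonneg _ (by positivity)
        linarith [tle lo]
      by_cases hblo : bad lo
      · obtain ⟨r, hr8, hrineq⟩ := hblo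
        have hjump := tjump lo r hrineq
        -- split the set
        have hsub : ((Finset.range (D + 1)).filter (fun j => lo ≤ j ∧ bad j)) ⊆
            (Finset.Ico lo (lo + r)) ∪
            ((Finset.range (D + 1)).filter (fun j => lo + r ≤ j ∧ bad j)) := by
          intro j hj
          simp only [Finset.mem_filter, Finset.mem_range] at hj
          simp only [Finset.mem_union, Finset.mem_Ico, Finset.mem_filter,
            Finset.mem_range]
          rcases Nat.lt_or_ge j (lo + r) with h | h
          · exact Or.inl ⟨hj.2.1, h⟩
          · exact Or.inr ⟨hj.1, h, hj.2.2⟩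
        have hcard := Finset.card_le_card hsub
        have hcard2 := Finset.card_union_le (Finset.Ico lo (lo + r))
            ((Finset.range (D + 1)).filter (fun j => lo + r ≤ j ∧ bad j))
        have hIco : (Finset.Ico lo (lo + r)).card = r := by
          rw [Nat.card_Ico]; omega
        have hih := ih (lo + r) (by omega)
        have hchain : (((Finset.range (D + 1)).filter
            (fun j => lo ≤ j ∧ bad j)).card : ℝ)
            ≤ (r : ℝ) + (Real.logb 2 α - t (lo + r)) / (16 * b) := by
          have : (((Finset.range (D + 1)).filter
              (fun j => lo ≤ j ∧ bad j)).card : ℝ)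
              ≤ (r : ℝ) + (((Finset.range (D + 1)).filter
                (fun j => lo + r ≤ j ∧ bad j)).card : ℝ) := by
            have := hcard.trans hcard2
            rw [hIco] at this
            exact_mod_cast this
          linarith
        have hpow16 : (16 : ℝ) * r ≤ 2 ^ (r - 1) := by
          have := pow16 r hr8
          exact_mod_cast this
        have ht2 : t lo + (b : ℝ) * 2 ^ (r - 1) ≤ t (lo + r) := hjump
        calc (((Finset.range (D + 1)).filter (fun j => lo ≤ j ∧ bad j)).card : ℝ)
            ≤ (r : ℝ) + (Real.logb 2 α - t (lo + r)) / (16 * b) := hchain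
          _ ≤ (r : ℝ) + (Real.logb 2 α - t lo - (b : ℝ) * 2 ^ (r - 1)) / (16 * b) :=
              (add_le_add_iff_left _).2
                (div_le_div_of_nonneg_right (by linarith) (by positivity))
          _ = (Real.logb 2 α - t lo) / (16 * b) + ((r : ℝ) - (2 : ℝ) ^ (r - 1) / 16) := by
              field_simp
              ring
          _ ≤ (Real.logb 2 α - t lo) / (16 * b) := by
              nlinarith
      · -- lo itself not bad
        have hsub : ((Finset.range (D + 1)).filter (fun j => lo ≤ j ∧ bad j)) ⊆
            ((Finset.range (D + 1)).filter (fun j => lo + 1 ≤ j ∧ bad j)) := by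
          intro j hj
          simp only [Finset.mem_filter, Finset.mem_range] at hj ⊢
          refine ⟨hj.1, ?_, hj.2.2⟩
          rcases Nat.eq_or_lt_of_le hj.2.1 with h | h
          · exact absurd (h ▸ hj.2.2) hblo
          · omega
        have hih := ih (lo + 1) (by omega)
        have := Finset.card_le_card hsub
        have h1 : (((Finset.range (D + 1)).filter
            (fun j => lo ≤ j ∧ bad j)).card : ℝ)
            ≤ (Real.logb 2 α - t (lo + 1)) / (16 * b) := by
          calc (((Finset.range (D + 1)).filter (fun j => lo ≤ j ∧ bad j)).card : ℝ)
              ≤ (((Finset.range (D + 1)).filter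
                (fun j => lo + 1 ≤ j ∧ bad j)).card : ℝ) := by exact_mod_cast this
            _ ≤ _ := hih
        have h2 : t lo ≤ t (lo + 1) := tmono lo (lo + 1) (by omega)
        calc (((Finset.range (D + 1)).filter (fun j => lo ≤ j ∧ bad j)).card : ℝ)
            ≤ (Real.logb 2 α - t (lo + 1)) / (16 * b) := h1
          _ ≤ (Real.logb 2 α - t lo) / (16 * b) := by
              apply div_le_div_of_nonneg_right ?_ ?_ <;> try positivity
              linarith
  -- apply at lo = 0
  have hmain := key (D + 1) 0 (by omega)
  have hsubset : ((Finset.range (D + 1)).filter (fun j : ℕ =>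
        0.01 * Real.logb 2 D ≤ (j : ℝ) ∧ (j : ℝ) ≤ 0.1 * Real.logb 2 D ∧
        ∃ r : ℕ, 8 ≤ r ∧
          2 ^ (b * 2 ^ (r - 1)) * s (j + ℓ) < s (j + ℓ + r))) ⊆
      ((Finset.range (D + 1)).filter (fun j => 0 ≤ j ∧ bad j)) := by
    intro j hj
    simp only [Finset.mem_filter, Finset.mem_range] at hj ⊢
    exact ⟨hj.1, Nat.zero_le _, hj.2.2.2⟩
  have hcard := Finset.card_le_card hsubset
  have hlogα : Real.logb 2 α ≤ (b : ℝ) * Real.logb 2 D / 4 := by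
    have hlogDpos : (0:ℝ) < Real.logb 2 D := by linarith
    rw [div_le_iff₀ hlogDpos] at hbα
    linarith
  have hlogαpos : (0:ℝ) ≤ Real.logb 2 α :=
    Real.logb_nonneg (by norm_num) (by linarith)
  calc (((Finset.range (D + 1)).filter (fun j : ℕ =>
        0.01 * Real.logb 2 D ≤ (j : ℝ) ∧ (j : ℝ) ≤ 0.1 * Real.logb 2 D ∧
        ∃ r : ℕ, 8 ≤ r ∧
          2 ^ (b * 2 ^ (r - 1)) * s (j + ℓ) < s (j + ℓ + r))).card : ℝ)
      ≤ (((Finset.range (D + 1)).filter (fun j => 0 ≤ j ∧ bad j)).card : ℝ) := by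
        exact_mod_cast hcard
    _ ≤ (Real.logb 2 α - t 0) / (16 * b) := hmain
    _ ≤ Real.logb 2 α / (16 * b) := by
        apply div_le_div_of_nonneg_right ?_ ?_ <;> try positivity
        linarith [tnonneg 0]
    _ ≤ ((b : ℝ) * Real.logb 2 D / 4) / (16 * b) := by
        apply div_le_div_of_nonneg_right ?_ ?_ <;> try positivity
        linarith
    _ = Real.logb 2 D / 64 := by field_simp; ring
    _ ≤ 0.02 * Real.logb 2 D := by nlinarith
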